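/- Let D be a closed simple digraph satisfying property (★), and let C1 and C2 be distinct strong components of D such that C1 connects to C2. Then: (i) if C2 is nonterminal, then C1 fully connects to C2; (ii) if |C2| = 1 and either |C1| ≠ 2 or the vertex of C1 having an edge to C2 has out-degree at least 3, then C1 fully connects to C2; (iii) if |C2| = 2 and it is not the case that all edges from C1 to C2 end at one single vertex of C2, then C1 fully connects to C2; (iv) if |C2| ≥ 3, then C1 fully connects to C2. -/

import Mathlib

noncomputable section

variable {V : Type*}

/-- The arc `(a→b)`: the map sending `a` to `b` and fixing every other point. -/
def arcMap [DecidableEq V] (a b : V) : V → V := fun x => if x = a then b else x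

/-- Evaluate a word of arcs, applying the arcs from left to right. -/
def wordEval [DecidableEq V] (w : List (V × V)) : V → V :=
  fun x => w.foldl (fun y e => arcMap e.1 e.2 y) x

/-- `α ∈ ⟨D⟩`: `α` is a (nonempty) product of arcs of the digraph `D`. -/
def InGen [DecidableEq V] (D : V → V → Prop) (α : V → V) : Prop :=
  ∃ w : List (V × V), w ≠ [] ∧ (∀ e ∈ w, D e.1 e.2) ∧ wordEval w = α

/-- `ℓ(D, α)`: the minimal length of a word in the arcs of `D` expressing `α`. -/
def arcLen [DecidableEq V] (D : V → V → Prop) (α : V → V) : ℕ :=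
  sInf {k | ∃ w : List (V × V), w.length = k ∧ (∀ e ∈ w, D e.1 e.2) ∧ wordEval w = α}

/-- `fix(α)`: the number of fixed points of `α`. -/
def fixCnt (α : V → V) : ℕ := Set.ncard {x | α x = x}

/-- `rk(α)`: the rank of `α`, i.e. the cardinality of its image. -/
def rnk (α : V → V) : ℕ := Set.ncard (Set.range α)

/-- A set `C` is a cyclic orbit of `α` if it is a weakly connected component of the
functional digraph of `α` (edges `(x, α x)`) which is a directed cycle on at least two
vertices: equivalently, `C` is the forward orbit of a periodic point, has at least two
elements, and is closed under taking preimages. -/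
def IsCyclicOrbit (α : V → V) (C : Set V) : Prop :=
  2 ≤ C.ncard ∧ (∃ x ∈ C, (∃ k, 0 < k ∧ α^[k] x = x) ∧ C = {y | ∃ k, α^[k] x = y}) ∧
    ∀ y : V, α y ∈ C → y ∈ C

/-- `cycl(α)`: the number of cyclic orbits of `α`. -/
def cyclCnt (α : V → V) : ℕ := Set.ncard {C : Set V | IsCyclicOrbit α C}

/-- `D` is connected: any two vertices are joined by a directed path in some direction. -/
def ConnectedDigraph (D : V → V → Prop) : Prop :=
  ∀ u v : V, Relation.ReflTransGen D u v ∨ Relation.ReflTransGen D v u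

/-- `D` is closed (equal to its closure): whenever `(b,a)` is an edge lying on a directed
cycle of `D` (i.e. there is a directed path from `a` back to `b`), `(a,b)` is also an edge. -/
def ClosedDigraph (D : V → V → Prop) : Prop :=
  ∀ a b : V, D b a → Relation.ReflTransGen D a b → D a b

/-- Property (★): if `v0, v1, v2` is a directed path with `d_D(v0,v2) = 2`, then every
out-neighbour of `v1` and of `v2` lies in `{v0, v1, v2}`. -/
def StarCond (D : V → V → Prop) : Prop :=
  ∀ v0 v1 v2 : V, D v0 v1 → D v1 v2 → v0 ≠ v2 → ¬ D v0 v2 →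
    ∀ u : V, (D v1 u ∨ D v2 u) → (u = v0 ∨ u = v1 ∨ u = v2)

/-- `C` is a strong component of `D`. -/
def IsSC (D : V → V → Prop) (C : Set V) : Prop :=
  ∃ v : V, C = {u | Relation.ReflTransGen D u v ∧ Relation.ReflTransGen D v u}

/-- `C1` connects to `C2`: some edge goes from `C1` to `C2`. -/
def ConnectsTo (D : V → V → Prop) (C1 C2 : Set V) : Prop :=
  ∃ v1 ∈ C1, ∃ v2 ∈ C2, D v1 v2

/-- `C1` fully connects to `C2`: all pairs are edges. -/
def FullyConnects (D : V → V → Prop) (C1 C2 : Set V) : Prop :=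
  ∀ v1 ∈ C1, ∀ v2 ∈ C2, D v1 v2

/-- A terminal strong component: it connects to no other strong component. -/
def IsTerminalSC (D : V → V → Prop) (C : Set V) : Prop :=
  IsSC D C ∧ ∀ C' : Set V, IsSC D C' → C' ≠ C → ¬ ConnectsTo D C C'

/-- Property (★★): nonterminal strong components have at most 2 vertices and terminal
strong components have at most 3 vertices. -/
def StarStarCond (D : V → V → Prop) : Prop :=
  ∀ C : Set V, IsSC D C →
    (IsTerminalSC D C → C.ncard ≤ 3) ∧ (¬ IsTerminalSC D C → C.ncard ≤ 2)

/-- The induced subdigraph on `C` is an undirected path `a - b - c` on three vertices. -/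
def IsP3 (D : V → V → Prop) (C : Set V) : Prop :=
  ∃ a b c : V, a ≠ b ∧ b ≠ c ∧ a ≠ c ∧ C = {a, b, c} ∧
    ∀ u ∈ C, ∀ w ∈ C,
      (D u w ↔ (u = a ∧ w = b) ∨ (u = b ∧ w = a) ∨ (u = b ∧ w = c) ∨ (u = c ∧ w = b))

/-- `D` has a subdigraph isomorphic to `H`: an injection mapping edges of `H` to edges of `D`. -/
def HasSubdigraph (D : V → V → Prop) {m : ℕ} (H : Fin m → Fin m → Prop) : Prop :=
  ∃ f : Fin m → V, Function.Injective f ∧ ∀ i j : Fin m, H i j → D (f i) (f j)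

/-- `Θ_k`: the directed cycle on `k` vertices. -/
def Theta (k : ℕ) : Fin k → Fin k → Prop := fun i j => (j : ℕ) = ((i : ℕ) + 1) % k

/-- `Γ1` (vertices relabelled from `{1,…,5}` to `{0,…,4}`). -/
def Gamma1 : Fin 5 → Fin 5 → Prop := fun i j =>
  ((i : ℕ), (j : ℕ)) ∈ [(0,3),(3,0),(1,3),(3,1),(2,3),(3,2),(3,4)]

/-- `Γ2` (vertices relabelled from `{1,…,5}` to `{0,…,4}`). -/
def Gamma2 : Fin 5 → Fin 5 → Prop := fun i j =>
  ((i : ℕ), (j : ℕ)) ∈ [(0,2),(2,0),(1,2),(2,1),(2,3),(3,2),(3,4)]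

/-- `Γ3` (vertices relabelled from `{1,…,4}` to `{0,…,3}`). -/
def Gamma3 : Fin 4 → Fin 4 → Prop := fun i j =>
  ((i : ℕ), (j : ℕ)) ∈ [(0,1),(1,2),(2,0),(2,3)]

/-- `Γ4` (vertices relabelled from `{1,…,5}` to `{0,…,4}`). -/
def Gamma4 : Fin 5 → Fin 5 → Prop := fun i j =>
  ((i : ℕ), (j : ℕ)) ∈ [(0,1),(1,2),(2,3),(3,0),(3,4)]

/-- No subdigraph isomorphic to `Γ1`, `Γ2`, `Γ3`, `Γ4` or `Θ_k` for `k ≥ 5`. -/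
def ForbiddenFree (D : V → V → Prop) : Prop :=
  ¬ HasSubdigraph D Gamma1 ∧ ¬ HasSubdigraph D Gamma2 ∧ ¬ HasSubdigraph D Gamma3 ∧
    ¬ HasSubdigraph D Gamma4 ∧ ∀ k : ℕ, 5 ≤ k → ¬ HasSubdigraph D (Theta k)

/-- `D` is acyclic: it has no directed cycle. -/
def AcyclicRel (D : V → V → Prop) : Prop := ∀ v : V, ¬ Relation.TransGen D v v

/-- `ψ_A(u,w)`: the maximal number of edges of a directed path from `u` to `w` in `A`
(in particular `ψ_A(u,u) = 0`). -/
def psiLongest (A : V → V → Prop) (u w : V) : ℕ :=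
  sSup {l | ∃ p : List V, p.Chain' A ∧ p.Nodup ∧
    p.head? = some u ∧ p.getLast? = some w ∧ p.length = l + 1}

/-- `d_D(u,w)`: the minimal number of edges of a directed path from `u` to `w` in `D`. -/
def ddist (D : V → V → Prop) (u w : V) : ℕ :=
  sInf {l | ∃ p : List V, p.Chain' D ∧ p.head? = some u ∧ p.getLast? = some w ∧
    p.length = l + 1}

/-- A tournament: no loops, and exactly one of `(u,v)`, `(v,u)` is an edge for `u ≠ v`. -/
def IsTournament (D : V → V → Prop) : Prop :=
  (∀ v : V, ¬ D v v) ∧ ∀ u v : V, u ≠ v → (D u v ∨ D v u) ∧ ¬ (D u v ∧ D v u)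

/-- A strong (strongly connected) digraph. -/
def IsStrongDigraph (D : V → V → Prop) : Prop :=
  ∀ u v : V, Relation.ReflTransGen D u v

section Stmt6Aux

variable {D : V → V → Prop}

private lemma sc_mutual' {C : Set V} (h : IsSC D C) {u w : V} (hu : u ∈ C) (hw : w ∈ C) :
    Relation.ReflTransGen D u w := by
  obtain ⟨v, rfl⟩ := h
  exact hu.1.trans hw.2

private lemma sc_mem_between' {C : Set V} (h : IsSC D C) {u w z : V} (hu : u ∈ C) (hw : w ∈ C)
    (hA : Relation.ReflTransGen D u z) (hB : Relation.ReflTransGen D z w) : z ∈ C := by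
  obtain ⟨v, rfl⟩ := h
  exact ⟨hB.trans hw.1, hu.2.trans hA⟩

private lemma sc_eq' {C1 C2 : Set V} (h1 : IsSC D C1) (h2 : IsSC D C2) {u w : V}
    (hu : u ∈ C1) (hw : w ∈ C2) (huw : Relation.ReflTransGen D u w)
    (hwu : Relation.ReflTransGen D w u) : C1 = C2 := by
  obtain ⟨v1, rfl⟩ := h1
  obtain ⟨v2, rfl⟩ := h2
  ext z
  constructor
  · rintro ⟨hz1, hz2⟩
    exact ⟨hz1.trans (hu.2.trans (huw.trans hw.1)), hw.2.trans (hwu.trans (hu.1.trans hz2))⟩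
  · rintro ⟨hz1, hz2⟩
    exact ⟨hz1.trans (hw.2.trans (hwu.trans hu.1)), hu.2.trans (huw.trans (hw.1.trans hz2))⟩

end Stmt6Aux

/-- connections between strong components of a closed digraph with (★). -/
theorem stmt6 {V : Type*} [Fintype V] (D : V → V → Prop) (hloop : ∀ v, ¬ D v v)
    (hclosed : ClosedDigraph D) (hstar : StarCond D) (C1 C2 : Set V)
    (h1 : IsSC D C1) (h2 : IsSC D C2) (hne : C1 ≠ C2) (hcon : ConnectsTo D C1 C2) :
    (¬ IsTerminalSC D C2 → FullyConnects D C1 C2) ∧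
    (C2.ncard = 1 →
      (C1.ncard ≠ 2 ∨ ∃ v1 ∈ C1, (∃ v2 ∈ C2, D v1 v2) ∧ 3 ≤ Set.ncard {u | D v1 u}) →
      FullyConnects D C1 C2) ∧
    (C2.ncard = 2 →
      (¬ ∃ w ∈ C2, ∀ v1 ∈ C1, ∀ v2 ∈ C2, D v1 v2 → v2 = w) →
      FullyConnects D C1 C2) ∧
    (3 ≤ C2.ncard → FullyConnects D C1 C2) := by
  classical
  have disj : ∀ x : V, x ∈ C1 → x ∈ C2 → False := fun x hx1 hx2 =>
    hne (sc_eq' h1 h2 hx1 hx2 Relation.ReflTransGen.refl Relation.ReflTransGen.refl)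
  have symm1 : ∀ {p q : V}, p ∈ C1 → q ∈ C1 → D p q → D q p := fun {p q} hp hq hpq =>
    hclosed _ _ hpq (sc_mutual' h1 hq hp)
  have noback : ∀ {p x : V}, p ∈ C1 → x ∈ C2 → Relation.ReflTransGen D p x → D x p → False :=
    fun {p x} hp hx hpx hxp =>
      hne (sc_eq' h1 h2 hp hx hpx (Relation.ReflTransGen.single hxp))
  -- Lemma P1: if `b ∈ C2` has an out-neighbour and receives an edge from `C1`,
  -- then every vertex of `C1` has an edge to `b`.
  have P1 : ∀ b ∈ C2, (∃ w, D b w) → (∃ a ∈ C1, D a b) → ∀ u ∈ C1, D u b := by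
    rintro b hb ⟨w, hbw⟩ ⟨a, ha, hab⟩ u hu
    have hua : Relation.ReflTransGen D u a := sc_mutual' h1 hu ha
    have key : ∀ z, Relation.ReflTransGen D z a → z ∈ C1 → D z b := by
      intro z hza
      induction hza using Relation.ReflTransGen.head_induction_on with
      | refl => intro _; exact hab
      | head hzz' hz'a ih =>
        rename_i z z'
        intro hz
        have hz'C : z' ∈ C1 :=
          sc_mem_between' h1 hz ha (Relation.ReflTransGen.single hzz') hz'a
        have hz'b : D z' b := ih hz'C
        by_contra hzb
        have hzneb : z ≠ b := fun h => disj z hz (h ▸ hb)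
        have hst := hstar z z' b hzz' hz'b hzneb hzb
        rcases hst w (Or.inr hbw) with h' | h' | h'
        · exact noback hz hb
            (Relation.ReflTransGen.head hzz' (Relation.ReflTransGen.single hz'b)) (h' ▸ hbw)
        · exact noback hz'C hb (Relation.ReflTransGen.single hz'b) (h' ▸ hbw)
        · exact hloop b (h' ▸ hbw)
    exact key u hua hu
  -- Lemma P2: forward propagation within `C2`.
  have P2 : ∀ u ∈ C1, ∀ b ∈ C2, D u b →
      (∀ q c : V, q ∈ C2 → c ∈ C2 → D q c → (∀ y, D q y → y = c) →
        (∀ y, D c y → y = q) → False) →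
      ∀ c ∈ C2, D u c := by
    intro u hu b hb hub hside c hc
    have hbc := sc_mutual' h2 hb hc
    have key : ∀ z, Relation.ReflTransGen D b z → z ∈ C2 → D u z := by
      intro z hbz
      induction hbz with
      | refl => intro _; exact hub
      | tail hbq hqz ih =>
        rename_i q z
        intro hz
        have hq : q ∈ C2 :=
          sc_mem_between' h2 hb hz hbq (Relation.ReflTransGen.single hqz)
        have huq : D u q := ih hq
        by_contra huz
        have hunz : u ≠ z := fun h => disj u hu (h ▸ hz)
        have hst := hstar u q z huq hqz hunz huz
        have hqout : ∀ y, D q y → y = z := by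
          intro y hy
          rcases hst y (Or.inl hy) with h' | h' | h'
          · exact absurd (h' ▸ hy) fun h => noback hu hq (Relation.ReflTransGen.single huq) h
          · exact absurd (h' ▸ hy) (hloop q)
          · exact h'
        have hzout : ∀ y, D z y → y = q := by
          intro y hy
          rcases hst y (Or.inr hy) with h' | h' | h'
          · exact absurd (h' ▸ hy) fun h =>
              noback hu hz (Relation.ReflTransGen.head huq (Relation.ReflTransGen.single hqz)) h
          · exact h'
          · exact absurd (h' ▸ hy) (hloop z)
        exact hside q z hq hz hqz hqout hzout
    exact key c hbc hc
  -- obstruction: the two special vertices swallow all of `C2`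
  have obsub : ∀ q c : V, q ∈ C2 → (∀ y, D q y → y = c) → (∀ y, D c y → y = q) →
      C2 ⊆ ({q, c} : Set V) := by
    intro q c hq hqout hcout x hx
    have hqx := sc_mutual' h2 hq hx
    have key : ∀ z, Relation.ReflTransGen D q z → z = q ∨ z = c := by
      intro z hqz
      induction hqz with
      | refl => exact Or.inl rfl
      | tail hqz' hz'z ih =>
        rcases ih with rfl | rfl
        · exact Or.inr (hqout _ hz'z)
        · exact Or.inl (hcout _ hz'z)
    rcases key x hqx with rfl | rfl
    · exact Set.mem_insert _ _
    · exact Set.mem_insert_of_mem _ rfl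
  have scOut : ∀ b ∈ C2, ∀ x ∈ C2, b ≠ x → ∃ w, D b w := by
    intro b hb x hx hbx
    rcases (sc_mutual' h2 hb hx).cases_head with h | ⟨c, hbc, _⟩
    · exact absurd h hbx
    · exact ⟨c, hbc⟩
  refine ⟨?_, ?_, ?_, ?_⟩
  · -- (i) nonterminal
    intro hnt
    have hex : ∃ x ∈ C2, ∃ w, D x w ∧ w ∉ C2 := by
      by_contra hno
      push_neg at hno
      apply hnt
      refine ⟨h2, fun C' hC' hne' hcon' => ?_⟩
      obtain ⟨x, hx, w, hw, hxw⟩ := hcon'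
      have hw2 : w ∈ C2 := hno x hx w hxw
      exact hne' (sc_eq' hC' h2 hw hw2 Relation.ReflTransGen.refl Relation.ReflTransGen.refl)
    obtain ⟨x, hx, w, hxw, hwn⟩ := hex
    obtain ⟨a, ha, b, hb, hab⟩ := hcon
    have hbout : ∃ w', D b w' := by
      by_cases hbe : b = x
      · exact ⟨w, hbe ▸ hxw⟩
      · exact scOut b hb x hx hbe
    have H : ∀ u ∈ C1, D u b := P1 b hb hbout ⟨a, ha, hab⟩
    intro v1 hv1 v2 hv2
    refine P2 v1 hv1 b hb (H v1 hv1) ?_ v2 hv2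
    intro q c hq hc hqc hqout hcout
    have hsub := obsub q c hq hqout hcout
    have hxm := hsub hx
    simp only [Set.mem_insert_iff, Set.mem_singleton_iff] at hxm
    rcases hxm with rfl | rfl
    · have := hqout w hxw; subst this; exact hwn hc
    · have := hcout w hxw; subst this; exact hwn hq
  · -- (ii) |C2| = 1
    intro h1n hhyp
    obtain ⟨b0, hC2⟩ := Set.ncard_eq_one.mp h1n
    subst hC2
    obtain ⟨a, ha, b, hb, hab⟩ := hcon
    rw [Set.mem_singleton_iff] at hb
    subst hb
    suffices hS : ∀ u ∈ C1, D u b by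
      intro v1 hv1 v2 hv2
      rw [Set.mem_singleton_iff] at hv2
      subst hv2
      exact hS v1 hv1
    have hbmem : b ∈ ({b} : Set V) := Set.mem_singleton b
    by_cases hbout : ∃ w, D b w
    · exact P1 b hbmem hbout ⟨a, ha, hab⟩
    push_neg at hbout
    have hpos : 0 < C1.ncard := (Set.ncard_pos (Set.toFinite _)).mpr ⟨a, ha⟩
    by_cases hc1 : C1.ncard = 1
    · obtain ⟨a0, hC1⟩ := Set.ncard_eq_one.mp hc1
      intro u hu
      rw [hC1, Set.mem_singleton_iff] at hu ha
      subst hu; subst ha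
      exact hab
    by_cases hc2 : C1.ncard = 2
    · -- two-element C1: use the out-degree hypothesis
      obtain ⟨v1, hv1, ⟨v2, hv2, hv1v2⟩, hdeg⟩ := hhyp.resolve_left (not_not.mpr hc2)
      rw [Set.mem_singleton_iff] at hv2
      rw [hv2] at hv1v2
      intro u hu
      by_cases huv : u = v1
      · subst huv; exact hv1v2
      by_contra hub
      -- every element of C1 is u or v1
      have hall : ∀ z ∈ C1, z = u ∨ z = v1 := by
        intro z hz
        by_contra hcon'
        push_neg at hcon'
        have h3 : ({u, v1, z} : Set V).ncard = 3 :=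
          Set.ncard_eq_three.mpr ⟨u, v1, z, huv, Ne.symm hcon'.1, Ne.symm hcon'.2, rfl⟩
        have hsub : ({u, v1, z} : Set V) ⊆ C1 := by
          intro y hy
          simp only [Set.mem_insert_iff, Set.mem_singleton_iff] at hy
          rcases hy with rfl | rfl | rfl
          · exact hu
          · exact hv1
          · exact hz
        have := Set.ncard_le_ncard hsub (Set.toFinite _)
        omega
      -- edge u → v1
      have huv1 : D u v1 := by
        rcases (sc_mutual' h1 hu hv1).cases_head with h | ⟨y0, hedge, hrest⟩
        · exact absurd h huv
        · have hy0 : y0 ∈ C1 :=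
            sc_mem_between' h1 hu hv1 (Relation.ReflTransGen.single hedge) hrest
          rcases hall y0 hy0 with h' | h'
          · exact absurd (h' ▸ hedge) (hloop u)
          · exact h' ▸ hedge
      have hub' : u ≠ b := fun h => disj u hu (h ▸ hbmem)
      have hst := hstar u v1 b huv1 hv1v2 hub' hub
      have hout : {y | D v1 y} ⊆ ({u, b} : Set V) := by
        intro y hy
        rcases hst y (Or.inl hy) with h' | h' | h'
        · exact Set.mem_insert_iff.mpr (Or.inl h')
        · exact absurd (h' ▸ hy) (hloop v1)
        · exact Set.mem_insert_of_mem _ (Set.mem_singleton_iff.mpr h')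
      have hle := Set.ncard_le_ncard hout (Set.toFinite _)
      have h2' : ({u, b} : Set V).ncard ≤ 2 := by
        refine le_trans (Set.ncard_insert_le _ _) ?_
        simp [Set.ncard_singleton]
      omega
    -- |C1| ≥ 3
    have h3 : 3 ≤ C1.ncard := by omega
    intro u hu
    by_contra hub
    -- find a crossing edge p → s with ¬ D p b, D s b
    have cross : ∀ z, Relation.ReflTransGen D z a → z ∈ C1 → ¬ D z b →
        ∃ p ∈ C1, ∃ s ∈ C1, ¬ D p b ∧ D s b ∧ D p s := by
      intro z hza
      induction hza using Relation.ReflTransGen.head_induction_on with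
      | refl => intro _ hzb; exact absurd hab hzb
      | head hzz' hz'a ih =>
        rename_i z z'
        intro hz hzb
        have hz'C : z' ∈ C1 :=
          sc_mem_between' h1 hz ha (Relation.ReflTransGen.single hzz') hz'a
        by_cases hz'b : D z' b
        · exact ⟨z, hz, z', hz'C, hzb, hz'b, hzz'⟩
        · exact ih hz'C hz'b
    obtain ⟨p, hp, s, hs, hpb, hsb, hps⟩ := cross u (sc_mutual' h1 hu ha) hu hub
    have hpneb : p ≠ b := fun h => disj p hp (h ▸ hbmem)
    have hst := hstar p s b hps hsb hpneb hpb
    have hsout : ∀ y, D s y → y = p ∨ y = b := by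
      intro y hy
      rcases hst y (Or.inl hy) with h' | h' | h'
      · exact Or.inl h'
      · exact absurd (h' ▸ hy) (hloop s)
      · exact Or.inr h'
    have hsp : D s p := symm1 hp hs hps
    -- a third vertex t of C1
    have hthird : ∃ t ∈ C1, t ≠ s ∧ t ≠ p := by
      by_contra hno
      push_neg at hno
      have hsub : C1 ⊆ ({s, p} : Set V) := by
        intro z hz
        by_cases hzs : z = s
        · exact hzs ▸ Set.mem_insert _ _
        · exact (hno z hz hzs) ▸ Set.mem_insert_of_mem _ rfl
      have hle := Set.ncard_le_ncard hsub (Set.toFinite _)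
      have h2' : ({s, p} : Set V).ncard ≤ 2 := by
        refine le_trans (Set.ncard_insert_le _ _) ?_
        simp [Set.ncard_singleton]
      omega
    obtain ⟨t, ht, hts, htp⟩ := hthird
    have reach : ∀ z, Relation.ReflTransGen D s z → z ∈ C1 →
        z = s ∨ z = p ∨ ∃ y ∈ C1, y ≠ s ∧ y ≠ p ∧ D p y := by
      intro z hsz
      induction hsz with
      | refl => intro _; exact Or.inl rfl
      | tail hsz' hz'z ih =>
        rename_i z' z
        intro hz
        have hz'C : z' ∈ C1 :=
          sc_mem_between' h1 hs hz hsz' (Relation.ReflTransGen.single hz'z)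
        rcases ih hz'C with h' | h' | hy
        · rcases hsout z (h' ▸ hz'z) with h'' | h''
          · exact Or.inr (Or.inl h'')
          · exact absurd (Set.mem_singleton_iff.mpr h'') (fun hh => disj z hz hh)
        · by_cases h1z : z = s
          · exact Or.inl h1z
          by_cases h2z : z = p
          · exact Or.inr (Or.inl h2z)
          · exact Or.inr (Or.inr ⟨z, hz, h1z, h2z, h' ▸ hz'z⟩)
        · exact Or.inr (Or.inr hy)
    rcases reach t (sc_mutual' h1 hs ht) ht with h' | h' | ⟨y, hyC, hys, hyp', hpy⟩
    · exact hts h'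
    · exact htp h'
    have hyp2 : D y p := symm1 hp hyC hpy
    have hnys : ¬ D y s := by
      intro h
      have hsy : D s y := symm1 hyC hs h
      rcases hsout y hsy with h' | h'
      · exact hyp' h'
      · exact disj y hyC (Set.mem_singleton_iff.mpr h')
    have hst2 := hstar y p s hyp2 hps hys hnys
    rcases hst2 b (Or.inr hsb) with hb1 | hb1 | hb1
    · exact disj b (hb1 ▸ hyC) hbmem
    · exact disj b (hb1 ▸ hp) hbmem
    · exact disj b (hb1 ▸ hs) hbmem
  · -- (iii) |C2| = 2
    intro h2n hnotone
    obtain ⟨b, c, hbc, hC2⟩ := Set.ncard_eq_two.mp h2n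
    subst hC2
    have hbmem : b ∈ ({b, c} : Set V) := Set.mem_insert _ _
    have hcmem : c ∈ ({b, c} : Set V) := Set.mem_insert_of_mem _ rfl
    have hbout : ∃ w, D b w := scOut b hbmem c hcmem hbc
    have hcout : ∃ w, D c w := scOut c hcmem b hbmem hbc.symm
    have hEb : ∃ a ∈ C1, D a b := by
      by_contra hno
      push_neg at hno
      refine hnotone ⟨c, hcmem, fun v1 hv1 v2 hv2 hd => ?_⟩
      simp only [Set.mem_insert_iff, Set.mem_singleton_iff] at hv2
      rcases hv2 with rfl | rfl
      · exact absurd hd (hno v1 hv1)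
      · rfl
    have hEc : ∃ a ∈ C1, D a c := by
      by_contra hno
      push_neg at hno
      refine hnotone ⟨b, hbmem, fun v1 hv1 v2 hv2 hd => ?_⟩
      simp only [Set.mem_insert_iff, Set.mem_singleton_iff] at hv2
      rcases hv2 with rfl | rfl
      · rfl
      · exact absurd hd (hno v1 hv1)
    have Hb := P1 b hbmem hbout hEb
    have Hc := P1 c hcmem hcout hEc
    intro v1 hv1 v2 hv2
    simp only [Set.mem_insert_iff, Set.mem_singleton_iff] at hv2
    rcases hv2 with rfl | rfl
    · exact Hb v1 hv1
    · exact Hc v1 hv1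
  · -- (iv) |C2| ≥ 3
    intro h3
    obtain ⟨a, ha, b, hb, hab⟩ := hcon
    have hbout : ∃ w', D b w' := by
      have hex : ∃ x ∈ C2, x ≠ b := by
        by_contra hno
        push_neg at hno
        have hsub : C2 ⊆ ({b} : Set V) := fun x hx => hno x hx
        have := Set.ncard_le_ncard hsub (Set.toFinite _)
        rw [Set.ncard_singleton] at this
        omega
      obtain ⟨x, hx, hxb⟩ := hex
      exact scOut b hb x hx (Ne.symm hxb)
    have H := P1 b hb hbout ⟨a, ha, hab⟩
    intro v1 hv1 v2 hv2
    refine P2 v1 hv1 b hb (H v1 hv1) ?_ v2 hv2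
    intro q c hq hc hqc hqout hcout
    have hsub := obsub q c hq hqout hcout
    have hle := Set.ncard_le_ncard hsub (Set.toFinite _)
    have h2' : ({q, c} : Set V).ncard ≤ 2 := by
      refine le_trans (Set.ncard_insert_le _ _) ?_
      simp [Set.ncard_singleton]
    omega
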